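/- Let N ≥ 2 and let D be a nonempty convex set of Borel probability measures on [0,1]^N. Let ℓ_1, ℓ_2, … be a semi-adversarial loss sequence constrained by D, and write L_t = Σ_{s=1}^t ℓ_s. Then for every β > 0, every t ∈ ℕ, and every expert i ∈ [N] with Δ_i > 0: E[ exp( β·( min_{j∈[N]} L_t(j) − L_t(i) ) ) ] ≤ exp( t·( β²/2 − β·Δ_i ) ). -/

import Mathlib

open MeasureTheory ProbabilityTheory

/-- A semi-adversarial loss sequence constrained by `D`: random vectors `ℓ_1, ℓ_2, …`
with values in `[0,1]^N` such that for each `t` the conditional distribution of `ℓ_t`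
given `(ℓ_1,…,ℓ_{t−1})` lies in `D` almost surely. -/
def IsSemiAdv {Ω : Type*} [MeasurableSpace Ω] (μ : Measure Ω) [IsFiniteMeasure μ]
    {N : ℕ} (D : Set (Measure (Fin N → ℝ))) (ℓ : ℕ → Ω → Fin N → ℝ) : Prop :=
  (∀ t, Measurable (ℓ t)) ∧ (∀ t ω i, ℓ t ω i ∈ Set.Icc (0 : ℝ) 1) ∧
    ∀ t : ℕ, ∀ᵐ ω ∂μ,
      condDistrib (ℓ (t + 1)) (fun ω' (s : Fin t) => ℓ ((s : ℕ) + 1) ω') μ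
        (fun s : Fin t => ℓ ((s : ℕ) + 1) ω) ∈ D

/-- The effective stochastic gap `Δ_i = inf_{λ∈D} max_{j∈[N]} E_{ℓ∼λ}[ℓ(i) − ℓ(j)]`. -/
noncomputable def gap {N : ℕ} (D : Set (Measure (Fin N → ℝ))) (i : Fin N) : ℝ :=
  sInf ((fun lam => sSup (Set.range fun j : Fin N => ∫ v, (v i - v j) ∂lam)) '' D)

section Aux
open Real


lemma two_point_aux (p : ℝ) (hp0 : 0 < p) (hp1 : p < 1) (h : ℝ) :
    (1 - p) + p * Real.exp h ≤ Real.exp (p * h + h ^ 2 / 8) := by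
  set d : ℝ → ℝ := fun h => 1 - p + p * Real.exp h with hd_def
  have hdpos : ∀ x, 0 < d x := fun x => by
    have := Real.exp_pos x
    have : 0 < p * Real.exp x := mul_pos hp0 (Real.exp_pos x)
    simp only [hd_def]; linarith
  have hd : ∀ x : ℝ, HasDerivAt d (p * Real.exp x) x := fun x => by
    exact ((Real.hasDerivAt_exp x).const_mul p).const_add (1 - p)
  set ψ : ℝ → ℝ := fun x => p + x / 4 - p * Real.exp x / d x with hψ_def
  set φ : ℝ → ℝ := fun x => p * x + x ^ 2 / 8 - Real.log (d x) with hφ_def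
  have hφ' : ∀ x : ℝ, HasDerivAt φ (ψ x) x := by
    intro x
    have h1 : HasDerivAt (fun x : ℝ => p * x + x ^ 2 / 8) (p + x / 4) x := by
      have := ((hasDerivAt_id x).const_mul p).add
        (((hasDerivAt_pow 2 x)).div_const 8)
      refine this.congr_deriv ?_; ring
    have h2 : HasDerivAt (fun x => Real.log (d x)) (p * Real.exp x / d x) x :=
      (hd x).log (hdpos x).ne'
    exact h1.sub h2
  have hψ' : ∀ x : ℝ, HasDerivAt ψ (1 / 4 - p * Real.exp x * (1 - p) / d x ^ 2) x := by
    intro x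
    have h1 : HasDerivAt (fun x : ℝ => p + x / 4) (1 / 4) x := by
      simpa using ((hasDerivAt_id x).div_const 4).const_add p
    have h2 : HasDerivAt (fun x => p * Real.exp x / d x)
        ((p * Real.exp x * d x - p * Real.exp x * (p * Real.exp x)) / d x ^ 2) x :=
      (((Real.hasDerivAt_exp x).const_mul p)).div (hd x) (hdpos x).ne'
    have h3 := h1.sub h2
    refine h3.congr_deriv ?_
    have : d x = 1 - p + p * Real.exp x := rfl
    rw [this]
    ring
  have hψderiv_nonneg : ∀ x : ℝ, 0 ≤ 1 / 4 - p * Real.exp x * (1 - p) / d x ^ 2 := by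
    intro x
    have hdx : d x = (1 - p) + p * Real.exp x := rfl
    rw [sub_nonneg, div_le_div_iff₀ (pow_pos (hdpos x) 2) (by norm_num : (0:ℝ) < 4), hdx]
    nlinarith [sq_nonneg ((1 - p) - p * Real.exp x), Real.exp_pos x]
  have hψmono : Monotone ψ := by
    have : ∀ x, 0 ≤ deriv ψ x := fun x => (hψ' x).deriv ▸ hψderiv_nonneg x
    exact monotone_of_deriv_nonneg (fun x => (hψ' x).differentiableAt) this
  have hψ0 : ψ 0 = 0 := by
    simp only [hψ_def, hd_def]
    norm_num
  have hφ0 : φ 0 = 0 := by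
    simp only [hφ_def, hd_def]
    norm_num
  have hφnonneg : ∀ x : ℝ, 0 ≤ φ x := by
    intro x
    rcases le_total 0 x with hx | hx
    · have hmono : MonotoneOn φ (Set.Ici (0:ℝ)) := by
        apply monotoneOn_of_deriv_nonneg (convex_Ici 0)
          (Continuous.continuousOn (by
            fun_prop (disch := intro x; exact (hdpos x).ne')))
          (fun x _ => (hφ' x).differentiableAt.differentiableWithinAt)
        intro y hy
        rw [(hφ' y).deriv]
        have : (0:ℝ) ≤ y := le_of_lt (by simpa using hy)
        calc (0:ℝ) = ψ 0 := hψ0.symm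
        _ ≤ ψ y := hψmono this
      have := hmono (Set.self_mem_Ici) (Set.mem_Ici.2 hx) hx
      linarith [hφ0]
    · have hmono : AntitoneOn φ (Set.Iic (0:ℝ)) := by
        apply antitoneOn_of_deriv_nonpos (convex_Iic 0)
          (Continuous.continuousOn (by
            fun_prop (disch := intro x; exact (hdpos x).ne')))
          (fun x _ => (hφ' x).differentiableAt.differentiableWithinAt)
        intro y hy
        rw [(hφ' y).deriv]
        have : y ≤ (0:ℝ) := le_of_lt (by simpa using hy)
        calc ψ y ≤ ψ 0 := hψmono this
        _ = 0 := hψ0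
      have := hmono (Set.mem_Iic.2 hx) (Set.self_mem_Iic) hx
      linarith [hφ0]
  have hlog : Real.log (d h) ≤ p * h + h ^ 2 / 8 := by
    have := hφnonneg h
    simp only [hφ_def] at this
    linarith
  calc (1 - p) + p * Real.exp h = d h := rfl
  _ = Real.exp (Real.log (d h)) := (Real.exp_log (hdpos h)).symm
  _ ≤ Real.exp (p * h + h ^ 2 / 8) := Real.exp_le_exp.2 hlog

lemma two_point (p : ℝ) (hp0 : 0 ≤ p) (hp1 : p ≤ 1) (h : ℝ) :
    (1 - p) + p * Real.exp h ≤ Real.exp (p * h + h ^ 2 / 8) := by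
  rcases eq_or_lt_of_le hp0 with rfl | hp0'
  · simpa using Real.one_le_exp (by positivity)
  rcases eq_or_lt_of_le hp1 with rfl | hp1'
  · simpa using Real.exp_le_exp.2 (by nlinarith [sq_nonneg h] : h ≤ 1 * h + h ^ 2 / 8)
  exact two_point_aux p hp0' hp1' h


lemma chord (β x : ℝ) (hx : x ∈ Set.Icc (-1:ℝ) 1) :
    Real.exp (β * x) ≤ (Real.exp (-β) + Real.exp β) / 2 + (Real.exp β - Real.exp (-β)) / 2 * x := by
  have h := convexOn_exp.2 (Set.mem_univ (-β)) (Set.mem_univ β)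
    (show (0:ℝ) ≤ (1 - x) / 2 by linarith [hx.2])
    (show (0:ℝ) ≤ (1 + x) / 2 by linarith [hx.1])
    (show (1 - x) / 2 + (1 + x) / 2 = 1 by ring)
  simp only [smul_eq_mul] at h
  calc Real.exp (β * x) = Real.exp ((1 - x) / 2 * (-β) + (1 + x) / 2 * β) := by ring_nf
  _ ≤ (1 - x) / 2 * Real.exp (-β) + (1 + x) / 2 * Real.exp β := h
  _ = (Real.exp (-β) + Real.exp β) / 2 + (Real.exp β - Real.exp (-β)) / 2 * x := by ring

lemma hoeffding_int {α : Type*} [MeasurableSpace α] (lam : Measure α) [IsProbabilityMeasure lam]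
    (H : α → ℝ) (hHm : Measurable H) (hHb : ∀ᵐ v ∂lam, H v ∈ Set.Icc (-1:ℝ) 1)
    (β : ℝ) :
    ∫ v, Real.exp (β * H v) ∂lam ≤ Real.exp (β * ∫ v, H v ∂lam + β ^ 2 / 2) := by
  have hHnorm : ∀ᵐ v ∂lam, ‖H v‖ ≤ 1 := by
    filter_upwards [hHb] with v hv
    rw [Real.norm_eq_abs, abs_le]; exact ⟨hv.1, hv.2⟩
  have intH : Integrable H lam :=
    Integrable.mono' (integrable_const 1) hHm.aestronglyMeasurable hHnorm
  set m := ∫ v, H v ∂lam with hm_def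
  have hm : m ∈ Set.Icc (-1:ℝ) 1 := by
    have : ‖m‖ ≤ 1 * (lam Set.univ).toReal := norm_integral_le_of_norm_le_const hHnorm
    simp only [measure_univ, ENNReal.toReal_one, mul_one] at this
    rw [Real.norm_eq_abs, abs_le] at this
    exact ⟨this.1, this.2⟩
  have intexp : Integrable (fun v => Real.exp (β * H v)) lam := by
    apply Integrable.mono' (integrable_const (Real.exp |β|))
      (Measurable.exp (hHm.const_mul β)).aestronglyMeasurable
    filter_upwards [hHb] with v hv
    rw [Real.norm_eq_abs, abs_of_pos (Real.exp_pos _)]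
    apply Real.exp_le_exp.2
    calc β * H v ≤ |β * H v| := le_abs_self _
    _ = |β| * |H v| := abs_mul _ _
    _ ≤ |β| * 1 := by
        apply mul_le_mul_of_nonneg_left _ (abs_nonneg β)
        rw [abs_le]; exact ⟨hv.1, hv.2⟩
    _ = |β| := mul_one _
  have step1 : ∫ v, Real.exp (β * H v) ∂lam ≤
      (Real.exp (-β) + Real.exp β) / 2 + (Real.exp β - Real.exp (-β)) / 2 * m := by
    have hint2 : Integrable (fun v => (Real.exp (-β) + Real.exp β) / 2 +
        (Real.exp β - Real.exp (-β)) / 2 * H v) lam :=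
      (integrable_const _).add (intH.const_mul _)
    calc ∫ v, Real.exp (β * H v) ∂lam
        ≤ ∫ v, ((Real.exp (-β) + Real.exp β) / 2 + (Real.exp β - Real.exp (-β)) / 2 * H v) ∂lam := by
          apply integral_mono_ae intexp hint2
          filter_upwards [hHb] with v hv
          exact chord β (H v) hv
    _ = (Real.exp (-β) + Real.exp β) / 2 + (Real.exp β - Real.exp (-β)) / 2 * m := by
          rw [integral_add (integrable_const _) (intH.const_mul _), integral_const,
            integral_const_mul]
          simp [hm_def]
  have step2 : (Real.exp (-β) + Real.exp β) / 2 + (Real.exp β - Real.exp (-β)) / 2 * m ≤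
      Real.exp (β * m + β ^ 2 / 2) := by
    set p := (1 + m) / 2 with hp_def
    have h2p := two_point p (by linarith [hm.1]) (by linarith [hm.2]) (2 * β)
    calc (Real.exp (-β) + Real.exp β) / 2 + (Real.exp β - Real.exp (-β)) / 2 * m
        = Real.exp (-β) * ((1 - p) + p * Real.exp (2 * β)) := by
          have : Real.exp (-β) * Real.exp (2 * β) = Real.exp β := by
            rw [← Real.exp_add]; ring_nf
          rw [hp_def]; linear_combination (-(1 + m) / 2) * this
    _ ≤ Real.exp (-β) * Real.exp (p * (2 * β) + (2 * β) ^ 2 / 8) :=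
          mul_le_mul_of_nonneg_left h2p (le_of_lt (Real.exp_pos _))
    _ = Real.exp (β * m + β ^ 2 / 2) := by
          rw [← Real.exp_add]; congr 1; rw [hp_def]; ring
  linarith


lemma int_D {N : ℕ} (lam : Measure (Fin N → ℝ)) [IsProbabilityMeasure lam]
    (hb : ∀ᵐ v ∂lam, ∀ k, v k ∈ Set.Icc (0:ℝ) 1) (i j : Fin N) :
    Integrable (fun v => v i - v j) lam := by
  apply Integrable.mono' (integrable_const 1)
    ((measurable_pi_apply i).sub (measurable_pi_apply j)).aestronglyMeasurable
  filter_upwards [hb] with v hv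
  have h1 := hv i; have h2 := hv j
  rw [Real.norm_eq_abs, abs_le]
  simp only [Pi.sub_apply]
  exact ⟨by linarith [h1.1, h2.2], by linarith [h1.2, h2.1]⟩

lemma exists_q {N : ℕ} (hN : 2 ≤ N) (D : Set (Measure (Fin N → ℝ))) (hD : D.Nonempty)
    (hDprob : ∀ lam ∈ D, IsProbabilityMeasure lam ∧ ∀ᵐ v ∂lam, ∀ i, v i ∈ Set.Icc (0 : ℝ) 1)
    (hDconv : ∀ lam₁ ∈ D, ∀ lam₂ ∈ D, ∀ a : ENNReal, a ≤ 1 →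
      a • lam₁ + (1 - a) • lam₂ ∈ D)
    (i : Fin N) :
    ∃ q : Fin N → ℝ, (∀ j, 0 ≤ q j) ∧ (∑ j, q j = 1) ∧
      ∀ lam ∈ D, gap D i ≤ ∑ j, q j * ∫ v, (v i - v j) ∂lam := by
  have hNpos : 0 < N := by omega
  haveI : NeZero N := ⟨by omega⟩
  set Δ := gap D i with hΔ_def
  set c : Measure (Fin N → ℝ) → (Fin N → ℝ) := fun lam j => ∫ v, (v i - v j) ∂lam with hc_def
  set C : Set (Fin N → ℝ) := c '' D with hC_def
  set O : Set (Fin N → ℝ) := {x | ∀ j, x j < Δ} with hO_def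
  -- O is open and convex
  have hO_eq : O = ⋂ j, (fun x : Fin N → ℝ => x j) ⁻¹' Set.Iio Δ := by
    ext x; simp [hO_def]
  have hO_open : IsOpen O := by
    rw [hO_eq]
    exact isOpen_iInter_of_finite fun j => (continuous_apply j).isOpen_preimage _ isOpen_Iio
  have hO_conv : Convex ℝ O := by
    have h2 : O = ⋂ j, {x : Fin N → ℝ | x j < Δ} := by ext x; simp [hO_def]
    rw [h2]
    exact convex_iInter fun j => convex_halfSpace_lt ⟨fun _ _ => rfl, fun _ _ => rfl⟩ Δ
  have hO_ne : O.Nonempty := ⟨fun _ => Δ - 1, fun j => by simp⟩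
  -- C is convex
  have hC_conv : Convex ℝ C := by
    rintro _ ⟨lam₁, h₁, rfl⟩ _ ⟨lam₂, h₂, rfl⟩ a b ha hb hab
    have hb' : b = 1 - a := by linarith
    have ha1 : a ≤ 1 := by linarith
    set a' := ENNReal.ofReal a with ha'_def
    have ha'1 : a' ≤ 1 := by
      rw [ha'_def, ← ENNReal.ofReal_one]; exact ENNReal.ofReal_le_ofReal ha1
    have hmem := hDconv lam₁ h₁ lam₂ h₂ a' ha'1
    refine ⟨a' • lam₁ + (1 - a') • lam₂, hmem, ?_⟩
    haveI := (hDprob lam₁ h₁).1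
    haveI := (hDprob lam₂ h₂).1
    funext j
    have hint₁ := int_D lam₁ (hDprob lam₁ h₁).2 i j
    have hint₂ := int_D lam₂ (hDprob lam₂ h₂).2 i j
    have hone : (1 : ENNReal) - a' = ENNReal.ofReal (1 - a) := by
      rw [← ENNReal.ofReal_one, ha'_def, ← ENNReal.ofReal_sub _ ha]
    have e1 : c (a' • lam₁ + (1 - a') • lam₂) j
        = ∫ v, (v i - v j) ∂(a' • lam₁) + ∫ v, (v i - v j) ∂((1 - a') • lam₂) := by
      simp only [hc_def]
      exact integral_add_measure (hint₁.smul_measure ENNReal.ofReal_ne_top)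
        (hone ▸ hint₂.smul_measure ENNReal.ofReal_ne_top)
    simp only [Pi.add_apply, Pi.smul_apply, smul_eq_mul]
    rw [e1, integral_smul_measure, integral_smul_measure, hone]
    simp only [ha'_def, ENNReal.toReal_ofReal ha, ENNReal.toReal_ofReal (by linarith : (0:ℝ) ≤ 1 - a)]
    rw [hb']
    simp [smul_eq_mul, hc_def]
  -- C and O are disjoint
  have hdisj : Disjoint O C := by
    rw [Set.disjoint_right]
    rintro _ ⟨lam, hlam, rfl⟩ hO
    have hrange_ne : (Set.range fun j : Fin N => c lam j).Nonempty := Set.range_nonempty _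
    have hfin : (Set.range fun j : Fin N => c lam j).Finite := Set.finite_range _
    have hsup_mem := hrange_ne.csSup_mem hfin
    obtain ⟨j₀, hj₀⟩ := hsup_mem
    have h1 : Δ ≤ sSup (Set.range fun j : Fin N => c lam j) := by
      apply csInf_le
      · refine ⟨0, ?_⟩
        rintro _ ⟨lam', hlam', rfl⟩
        calc (0:ℝ) = (fun j : Fin N => ∫ v, (v i - v j) ∂lam') i := by simp
        _ ≤ _ := le_csSup (Set.finite_range _).bddAbove ⟨i, rfl⟩
      · exact ⟨lam, hlam, rfl⟩
    rw [← hj₀] at h1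
    exact absurd (hO j₀) (not_lt.2 h1)
  obtain ⟨f, u, hfO, hfC⟩ := geometric_hahn_banach_open hO_conv hO_open hC_conv hdisj
  -- decompose f
  set e : Fin N → (Fin N → ℝ) := fun j k => if j = k then (1:ℝ) else 0 with he_def
  set q0 : Fin N → ℝ := fun j => f (e j) with hq0_def
  have hf_eq : ∀ x : Fin N → ℝ, f x = ∑ j, x j * q0 j := by
    intro x
    conv_lhs => rw [pi_eq_sum_univ x]
    rw [map_sum]
    congr 1; funext j
    rw [ContinuousLinearMap.map_smul]; simp [hq0_def, he_def, smul_eq_mul]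
  have hbase : (fun _ : Fin N => Δ - 1) ∈ O := fun j => by simp
  -- q0 nonneg
  have hq0_nonneg : ∀ j, 0 ≤ q0 j := by
    intro j₀
    by_contra hneg
    push_neg at hneg
    set M := max 0 ((u - f (fun _ : Fin N => Δ - 1)) / (-q0 j₀)) with hM_def
    have hM0 : 0 ≤ M := le_max_left _ _
    set y : Fin N → ℝ := fun k => (Δ - 1) - (if j₀ = k then M else 0) with hy_def
    have hyO : y ∈ O := by
      intro k
      simp only [hy_def]
      split <;> [linarith; linarith]
    have hfy : f y = f (fun _ : Fin N => Δ - 1) - M * q0 j₀ := by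
      rw [hf_eq, hf_eq]
      rw [show M * q0 j₀ = ∑ k, (if j₀ = k then M else 0) * q0 k by
        simp [ite_mul, Finset.sum_ite_eq]]
      rw [← Finset.sum_sub_distrib]
      congr 1; funext k
      simp only [hy_def]; ring
    have h1 : (u - f (fun _ : Fin N => Δ - 1)) / (-q0 j₀) ≤ M := le_max_right _ _
    have h2 : u - f (fun _ : Fin N => Δ - 1) ≤ M * (-q0 j₀) := by
      rwa [div_le_iff₀ (by linarith : (0:ℝ) < -q0 j₀)] at h1
    have h3 : u ≤ f y := by rw [hfy]; linarith
    exact absurd (hfO y hyO) (not_lt.2 h3)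
  -- sum positive
  set S := ∑ j, q0 j with hS_def
  have hS_nonneg : 0 ≤ S := Finset.sum_nonneg fun j _ => hq0_nonneg j
  obtain ⟨lam₀, hlam₀⟩ := hD
  have hu_le : u ≤ f (c lam₀) := hfC _ ⟨lam₀, hlam₀, rfl⟩
  have hconst : ∀ r : ℝ, f (fun _ : Fin N => r) = r * S := by
    intro r
    rw [hf_eq, hS_def, Finset.mul_sum]
  have hS_pos : 0 < S := by
    rcases eq_or_lt_of_le hS_nonneg with heq | h
    · exfalso
      have hall : ∀ j, q0 j = 0 := by
        intro j
        have := (Finset.sum_eq_zero_iff_of_nonneg (fun j _ => hq0_nonneg j)).1 heq.symm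
        exact this j (Finset.mem_univ j)
      have hf0 : ∀ x, f x = 0 := by
        intro x; rw [hf_eq]; simp [hall]
      have := hfO _ hbase
      rw [hf0] at this
      rw [hf0] at hu_le
      linarith
    · exact h
  -- Δ * S ≤ f (c lam) for lam ∈ D
  have hkey : ∀ lam ∈ D, Δ * S ≤ f (c lam) := by
    intro lam hlam
    have hu' : u ≤ f (c lam) := hfC _ ⟨lam, hlam, rfl⟩
    have hΔS : Δ * S ≤ u := by
      by_contra hlt
      push_neg at hlt
      set ε := (Δ * S - u) / S with hε_def
      have hε_pos : 0 < ε := div_pos (by linarith) hS_pos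
      have hmem : (fun _ : Fin N => Δ - ε) ∈ O := fun j => by simp [hε_pos]
      have := hfO _ hmem
      rw [hconst] at this
      have : (Δ - ε) * S = u := by
        rw [hε_def]; field_simp; ring
      nlinarith [hfO _ hmem, hconst (Δ - ε)]
    linarith
  refine ⟨fun j => q0 j / S, fun j => div_nonneg (hq0_nonneg j) hS_nonneg, ?_, ?_⟩
  · rw [← Finset.sum_div, ← hS_def, div_self hS_pos.ne']
  · intro lam hlam
    have := hkey lam hlam
    rw [hf_eq] at this
    rw [show ∑ j, q0 j / S * ∫ v, (v i - v j) ∂lam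
        = (∑ j, (c lam) j * q0 j) / S by
      rw [Finset.sum_div]; congr 1; funext j; simp only [hc_def]; ring]
    rw [le_div_iff₀ hS_pos]
    linarith


lemma step_bound {Ω : Type*} [MeasurableSpace Ω] (μ : Measure Ω) [IsProbabilityMeasure μ]
    {N : ℕ} [NeZero N] (D : Set (Measure (Fin N → ℝ)))
    (ℓ : ℕ → Ω → Fin N → ℝ) (hmeas : ∀ t, Measurable (ℓ t)) (t : ℕ)
    (hae : ∀ᵐ ω ∂μ, condDistrib (ℓ (t + 1)) (fun ω' (s : Fin t) => ℓ ((s : ℕ) + 1) ω') μ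
        (fun s : Fin t => ℓ ((s : ℕ) + 1) ω) ∈ D)
    (F : (Fin t → Fin N → ℝ) → ℝ) (hF : Measurable F) (hFpos : ∀ x, 0 ≤ F x)
    (B : ℝ) (hFB : ∀ x, F x ≤ B)
    (g : (Fin N → ℝ) → ℝ) (hg : Measurable g) (hgpos : ∀ y, 0 ≤ g y)
    (Bg : ℝ) (hgB : ∀ y, g y ≤ Bg)
    (K : ℝ) (hDg : ∀ lam ∈ D, ∫ y, g y ∂lam ≤ K) :
    ∫ ω, F (fun s : Fin t => ℓ ((s : ℕ) + 1) ω) * g (ℓ (t + 1) ω) ∂μ ≤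
      K * ∫ ω, F (fun s : Fin t => ℓ ((s : ℕ) + 1) ω) ∂μ := by
  set X : Ω → (Fin t → Fin N → ℝ) := fun ω' (s : Fin t) => ℓ ((s : ℕ) + 1) ω' with hX_def
  have hX : Measurable X := measurable_pi_lambda _ fun s => hmeas _
  set Y : Ω → (Fin N → ℝ) := ℓ (t + 1) with hY_def
  have hY : Measurable Y := hmeas _
  set ρ : Measure ((Fin t → Fin N → ℝ) × (Fin N → ℝ)) := μ.map fun ω => (X ω, Y ω) with hρ_def
  haveI : IsProbabilityMeasure ρ := Measure.isProbabilityMeasure_map (hX.prodMk hY).aemeasurable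
  have hκ : condDistrib Y X μ = ρ.condKernel := by rw [condDistrib]
  have hBg0 : 0 ≤ Bg := le_trans (hgpos 0) (hgB 0)
  have hB0 : 0 ≤ B := le_trans (hFpos (fun _ _ => 0)) (hFB _)
  have hFg : Measurable fun p : (Fin t → Fin N → ℝ) × (Fin N → ℝ) => F p.1 * g p.2 :=
    (hF.comp measurable_fst).mul (hg.comp measurable_snd)
  -- measurability of x ↦ ∫ y, g y ∂(ρ.condKernel x)
  have hmeas_int : StronglyMeasurable fun x => ∫ y, g y ∂(ρ.condKernel x) :=
    (hg.stronglyMeasurable.comp_measurable measurable_snd).integral_kernel_prod_right'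
  -- step 1: rewrite as integral over ρ
  have e1 : ∫ ω, F (X ω) * g (Y ω) ∂μ = ∫ p, F p.1 * g p.2 ∂ρ := by
    rw [hρ_def, integral_map (hX.prodMk hY).aemeasurable hFg.aestronglyMeasurable]
  -- step 2: disintegrate
  have e2 : ∫ p, F p.1 * g p.2 ∂ρ
      = ∫ x, F x * ∫ y, g y ∂(ρ.condKernel x) ∂ρ.fst := by
    conv_lhs => rw [← ρ.disintegrate ρ.condKernel]
    rw [Measure.integral_compProd]
    · exact integral_congr_ae (Filter.Eventually.of_forall fun x => by simpa using integral_const_mul (F x) g)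
    · apply Integrable.mono' (integrable_const (B * Bg))
        ((hF.comp measurable_fst).mul (hg.comp measurable_snd)).aestronglyMeasurable
      · refine Filter.Eventually.of_forall fun p => ?_
        show ‖F p.1 * g p.2‖ ≤ B * Bg
        rw [Real.norm_eq_abs, abs_of_nonneg (mul_nonneg (hFpos _) (hgpos _))]
        exact mul_le_mul (hFB _) (hgB _) (hgpos _) hB0
  -- step 3: back to μ
  have e3 : ∫ x, F x * ∫ y, g y ∂(ρ.condKernel x) ∂ρ.fst
      = ∫ ω, F (X ω) * ∫ y, g y ∂(ρ.condKernel (X ω)) ∂μ := by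
    have hfst : ρ.fst = μ.map X := Measure.fst_map_prodMk hY
    rw [hfst,
      integral_map hX.aemeasurable
        (show AEStronglyMeasurable (fun x => F x * ∫ y, g y ∂(ρ.condKernel x)) _ from
          (hF.stronglyMeasurable.mul hmeas_int).aestronglyMeasurable)]
  -- step 4: bound using hae
  have hae' : ∀ᵐ ω ∂μ, ρ.condKernel (X ω) ∈ D := by
    filter_upwards [hae] with ω hω
    rwa [hκ] at hω
  have e4 : ∫ ω, F (X ω) * ∫ y, g y ∂(ρ.condKernel (X ω)) ∂μ
      ≤ ∫ ω, F (X ω) * K ∂μ := by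
    apply integral_mono_ae
    · apply Integrable.mono' (integrable_const (B * Bg))
        (show AEStronglyMeasurable (fun ω => F (X ω) * ∫ y, g y ∂(ρ.condKernel (X ω))) μ from
        ((hF.comp hX).stronglyMeasurable.mul (hmeas_int.comp_measurable hX)).aestronglyMeasurable)
      refine Filter.Eventually.of_forall fun ω => ?_
      rw [Real.norm_eq_abs, abs_of_nonneg (mul_nonneg (hFpos _)
        (integral_nonneg hgpos))]
      refine mul_le_mul (hFB _) ?_ (integral_nonneg hgpos) hB0
      calc ∫ y, g y ∂(ρ.condKernel (X ω)) ≤ ∫ _, Bg ∂(ρ.condKernel (X ω)) := by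
            apply integral_mono_ae
            · exact Integrable.mono' (integrable_const Bg)
                hg.aestronglyMeasurable
                (Filter.Eventually.of_forall fun y => by
                  rw [Real.norm_eq_abs, abs_of_nonneg (hgpos y)]; exact hgB y)
            · exact integrable_const _
            · exact Filter.Eventually.of_forall hgB
      _ ≤ Bg := by
            rw [integral_const]
            calc (ρ.condKernel (X ω) Set.univ).toReal * Bg ≤ 1 * Bg := by
                  apply mul_le_mul_of_nonneg_right _ hBg0
                  simp [measure_univ]
            _ = Bg := one_mul _
    · exact ((integrable_const B).mono'
        (show AEStronglyMeasurable (fun ω => F (X ω)) μ from (hF.comp hX).aestronglyMeasurable)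
        (Filter.Eventually.of_forall fun ω => by
          rw [Real.norm_eq_abs, abs_of_nonneg (hFpos _)]; exact hFB _)).mul_const K
    · filter_upwards [hae'] with ω hω
      exact mul_le_mul_of_nonneg_left (hDg _ hω) (hFpos _)
  rw [e1, e2, e3]
  calc _ ≤ ∫ ω, F (X ω) * K ∂μ := e4
  _ = K * ∫ ω, F (X ω) ∂μ := by rw [integral_mul_const]; ring


end Aux

lemma sum_Icc_fin (u : ℕ → ℝ) (t : ℕ) :
    ∑ s ∈ Finset.Icc 1 t, u s = ∑ s : Fin t, u ((s : ℕ) + 1) := by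
  induction t with
  | zero => simp
  | succ n ih =>
    rw [Finset.sum_Icc_succ_top (by omega), ih, Fin.sum_univ_castSucc]
    simp


/-- under a semi-adversarial constraint `D`, for every `β > 0`, `t`, and
expert `i` with `Δ_i > 0`:
`E[exp(β·(min_j L_t(j) − L_t(i)))] ≤ exp(t·(β²/2 − β·Δ_i))`. -/
theorem stmt14 {Ω : Type*} [MeasurableSpace Ω] (μ : Measure Ω) [IsProbabilityMeasure μ]
    (N : ℕ) (hN : 2 ≤ N) (D : Set (Measure (Fin N → ℝ))) (hD : D.Nonempty)
    (hDprob : ∀ lam ∈ D, IsProbabilityMeasure lam ∧ ∀ᵐ v ∂lam, ∀ i, v i ∈ Set.Icc (0 : ℝ) 1)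
    (hDconv : ∀ lam₁ ∈ D, ∀ lam₂ ∈ D, ∀ a : ENNReal, a ≤ 1 →
      a • lam₁ + (1 - a) • lam₂ ∈ D)
    (ℓ : ℕ → Ω → Fin N → ℝ) (hsa : IsSemiAdv μ D ℓ)
    (β : ℝ) (hβ : 0 < β) (t : ℕ) (i : Fin N) (hi : 0 < gap D i) :
    ∫ ω, Real.exp (β * (sInf (Set.range fun j => ∑ s ∈ Finset.Icc 1 t, ℓ s ω j)
        - ∑ s ∈ Finset.Icc 1 t, ℓ s ω i)) ∂μ ≤
      Real.exp ((t : ℝ) * (β ^ 2 / 2 - β * gap D i)) := by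
  classical
  obtain ⟨hmeas, hbounds, hcond⟩ := hsa
  haveI : NeZero N := ⟨by omega⟩
  set Δ := gap D i with hΔ
  obtain ⟨q, hq0, hq1, hqD⟩ := exists_q hN D hD hDprob hDconv i
  set Hq : (Fin N → ℝ) → ℝ := fun v => max (-1) (min 1 ((∑ j, q j * v j) - v i)) with hHq
  have hHicc : ∀ v, Hq v ∈ Set.Icc (-1:ℝ) 1 := fun v =>
    ⟨le_max_left _ _, max_le (by norm_num) (min_le_left _ _)⟩
  have hHraw : ∀ v : Fin N → ℝ, (∀ k, v k ∈ Set.Icc (0:ℝ) 1) →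
      Hq v = (∑ j, q j * v j) - v i := by
    intro v hv
    have h1 : (∑ j, q j * v j) ≤ 1 := by
      calc ∑ j, q j * v j ≤ ∑ j, q j * 1 := Finset.sum_le_sum fun j _ =>
            mul_le_mul_of_nonneg_left (hv j).2 (hq0 j)
      _ = 1 := by simp [hq1]
    have h2 : 0 ≤ ∑ j, q j * v j := Finset.sum_nonneg fun j _ => mul_nonneg (hq0 j) (hv j).1
    have hvi0 := (hv i).1; have hvi1 := (hv i).2
    rw [hHq]
    simp only
    rw [min_eq_right (by linarith), max_eq_right (by linarith)]
  have hHm : Measurable Hq := by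
    apply Measurable.max measurable_const
    apply Measurable.min measurable_const
    exact (Finset.measurable_sum _ fun j _ => (measurable_pi_apply (X := fun _ : Fin N => ℝ) j).const_mul (q j)).sub
      (measurable_pi_apply i)
  -- integral of Hq over lam ∈ D is at most -Δ
  have hHint : ∀ lam ∈ D, ∫ v, Hq v ∂lam ≤ -Δ := by
    intro lam hlam
    haveI := (hDprob lam hlam).1
    have hb := (hDprob lam hlam).2
    have hint : ∀ k : Fin N, Integrable (fun v : Fin N → ℝ => v k) lam := by
      intro k
      apply Integrable.mono' (integrable_const 1) (measurable_pi_apply k).aestronglyMeasurable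
      filter_upwards [hb] with v hv
      rw [Real.norm_eq_abs, abs_le]
      exact ⟨by linarith [(hv k).1], (hv k).2⟩
    have e0 : ∫ v, Hq v ∂lam = (∑ j, q j * ∫ v, (v : Fin N → ℝ) j ∂lam) - ∫ v, v i ∂lam := by
      rw [integral_congr_ae (g := fun v => (∑ j, q j * v j) - v i)
        (by filter_upwards [hb] with v hv; exact hHraw v hv)]
      rw [integral_sub (integrable_finset_sum _ fun j _ => (hint j).const_mul (q j)) (hint i)]
      congr 1
      rw [integral_finset_sum _ fun j _ => (hint j).const_mul (q j)]
      congr 1; funext j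
      exact integral_const_mul _ _
    have e1 : ∑ j, q j * ∫ v, ((v : Fin N → ℝ) i - v j) ∂lam
        = (∫ v, (v : Fin N → ℝ) i ∂lam) - ∑ j, q j * ∫ v, (v : Fin N → ℝ) j ∂lam := by
      calc ∑ j, q j * ∫ v, ((v : Fin N → ℝ) i - v j) ∂lam
          = ∑ j, (q j * ∫ v, (v : Fin N → ℝ) i ∂lam - q j * ∫ v, (v : Fin N → ℝ) j ∂lam) := by
            apply Finset.sum_congr rfl
            intro j _
            rw [integral_sub (hint i) (hint j)]; ring
      _ = _ := by rw [Finset.sum_sub_distrib, ← Finset.sum_mul, hq1, one_mul]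
    have hkey := hqD lam hlam
    rw [e1] at hkey
    rw [e0]
    linarith
  set K := Real.exp (β ^ 2 / 2 - β * Δ) with hK
  have hK0 : 0 ≤ K := (Real.exp_pos _).le
  have hDg : ∀ lam ∈ D, ∫ y, Real.exp (β * Hq y) ∂lam ≤ K := by
    intro lam hlam
    haveI := (hDprob lam hlam).1
    calc ∫ y, Real.exp (β * Hq y) ∂lam ≤ Real.exp (β * ∫ v, Hq v ∂lam + β ^ 2 / 2) :=
      hoeffding_int lam Hq hHm (Filter.Eventually.of_forall hHicc) β
    _ ≤ K := by
      rw [hK]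
      apply Real.exp_le_exp.2
      have h1 := hHint lam hlam
      nlinarith [mul_le_mul_of_nonneg_left h1 hβ.le]
  -- sum bound helpers
  have hsum_le : ∀ (n : ℕ) (x : Fin n → Fin N → ℝ), (∑ s : Fin n, Hq (x s)) ≤ n := by
    intro n x
    calc ∑ s : Fin n, Hq (x s) ≤ ∑ s : Fin n, (1:ℝ) :=
          Finset.sum_le_sum fun s _ => (hHicc _).2
    _ = n := by simp
  -- induction
  have ind : ∀ n : ℕ, ∫ ω, Real.exp (β * ∑ s : Fin n, Hq (ℓ ((s : ℕ) + 1) ω)) ∂μ ≤ K ^ n := by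
    intro n
    induction n with
    | zero => simp
    | succ n ih =>
      have hFm : Measurable fun x : Fin n → Fin N → ℝ => Real.exp (β * ∑ s : Fin n, Hq (x s)) :=
        ((Finset.measurable_sum _ fun s _ => hHm.comp (measurable_pi_apply s)).const_mul β).exp
      have hstep := step_bound μ D ℓ hmeas n (hcond n)
        (fun x => Real.exp (β * ∑ s : Fin n, Hq (x s))) hFm
        (fun x => (Real.exp_pos _).le) (Real.exp (β * n))
        (fun x => Real.exp_le_exp.2 (mul_le_mul_of_nonneg_left (hsum_le n x) hβ.le))
        (fun y => Real.exp (β * Hq y)) ((hHm.const_mul β).exp)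
        (fun y => (Real.exp_pos _).le) (Real.exp β)
        (fun y => Real.exp_le_exp.2 (by
          have := (hHicc y).2
          nlinarith))
        K hDg
      calc ∫ ω, Real.exp (β * ∑ s : Fin (n+1), Hq (ℓ ((s : ℕ) + 1) ω)) ∂μ
          = ∫ ω, Real.exp (β * ∑ s : Fin n, Hq (ℓ ((s : ℕ) + 1) ω))
              * Real.exp (β * Hq (ℓ (n + 1) ω)) ∂μ := by
            congr 1; funext ω
            rw [← Real.exp_add]
            congr 1
            rw [Fin.sum_univ_castSucc]
            simp only [Fin.coe_castSucc, Fin.val_last]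
            ring
      _ ≤ K * ∫ ω, Real.exp (β * ∑ s : Fin n, Hq (ℓ ((s : ℕ) + 1) ω)) ∂μ := hstep
      _ ≤ K * K ^ n := mul_le_mul_of_nonneg_left ih hK0
      _ = K ^ (n + 1) := (pow_succ' K n).symm
  -- pointwise comparison
  have hpt : ∀ ω, (sInf (Set.range fun j => ∑ s ∈ Finset.Icc 1 t, ℓ s ω j)
      - ∑ s ∈ Finset.Icc 1 t, ℓ s ω i) ≤ ∑ s : Fin t, Hq (ℓ ((s : ℕ) + 1) ω) := by
    intro ω
    have hbdd : BddBelow (Set.range fun j => ∑ s ∈ Finset.Icc 1 t, ℓ s ω j) :=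
      (Set.finite_range _).bddBelow
    have hle : sInf (Set.range fun j => ∑ s ∈ Finset.Icc 1 t, ℓ s ω j)
        ≤ ∑ j, q j * ∑ s ∈ Finset.Icc 1 t, ℓ s ω j := by
      calc sInf (Set.range fun j => ∑ s ∈ Finset.Icc 1 t, ℓ s ω j)
          = (∑ j, q j) * sInf (Set.range fun j => ∑ s ∈ Finset.Icc 1 t, ℓ s ω j) := by
            rw [hq1, one_mul]
      _ = ∑ j, q j * sInf (Set.range fun j => ∑ s ∈ Finset.Icc 1 t, ℓ s ω j) :=
            Finset.sum_mul ..
      _ ≤ ∑ j, q j * ∑ s ∈ Finset.Icc 1 t, ℓ s ω j :=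
            Finset.sum_le_sum fun j _ =>
              mul_le_mul_of_nonneg_left (csInf_le hbdd ⟨j, rfl⟩) (hq0 j)
    have hswap : (∑ j, q j * ∑ s ∈ Finset.Icc 1 t, ℓ s ω j) - ∑ s ∈ Finset.Icc 1 t, ℓ s ω i
        = ∑ s ∈ Finset.Icc 1 t, ((∑ j, q j * ℓ s ω j) - ℓ s ω i) := by
      rw [Finset.sum_sub_distrib]
      congr 1
      simp_rw [Finset.mul_sum]
      rw [Finset.sum_comm]
    have hHq_eq : ∑ s ∈ Finset.Icc 1 t, ((∑ j, q j * ℓ s ω j) - ℓ s ω i)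
        = ∑ s ∈ Finset.Icc 1 t, Hq (ℓ s ω) :=
      Finset.sum_congr rfl fun s _ => (hHraw (ℓ s ω) (fun k => hbounds s ω k)).symm
    have hreidx : ∑ s ∈ Finset.Icc 1 t, Hq (ℓ s ω) = ∑ s : Fin t, Hq (ℓ ((s : ℕ) + 1) ω) :=
      sum_Icc_fin (fun s => Hq (ℓ s ω)) t
    linarith [hle, hswap ▸ (hHq_eq ▸ (hreidx ▸ le_refl (∑ s : Fin t, Hq (ℓ ((s : ℕ) + 1) ω))))]
  -- final comparison of integrals
  have hmeasInf : Measurable fun ω => sInf (Set.range fun j => ∑ s ∈ Finset.Icc 1 t, ℓ s ω j) := by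
    have heq : (fun ω => sInf (Set.range fun j => ∑ s ∈ Finset.Icc 1 t, ℓ s ω j))
        = fun ω => ⨅ j, ∑ s ∈ Finset.Icc 1 t, ℓ s ω j := rfl
    rw [heq]
    exact Measurable.iInf fun j =>
      Finset.measurable_sum _ fun s _ => (measurable_pi_apply j).comp (hmeas s)
  have hint1 : Integrable (fun ω => Real.exp (β * (sInf (Set.range fun j =>
      ∑ s ∈ Finset.Icc 1 t, ℓ s ω j) - ∑ s ∈ Finset.Icc 1 t, ℓ s ω i))) μ := by
    apply Integrable.mono' (integrable_const 1)
      (((hmeasInf.sub (Finset.measurable_sum _ fun s _ =>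
        (measurable_pi_apply i).comp (hmeas s))).const_mul β).exp).aestronglyMeasurable
    refine Filter.Eventually.of_forall fun ω => ?_
    show ‖Real.exp (β * (sInf (Set.range fun j => ∑ s ∈ Finset.Icc 1 t, ℓ s ω j)
      - ∑ s ∈ Finset.Icc 1 t, ℓ s ω i))‖ ≤ 1
    rw [Real.norm_eq_abs, abs_of_pos (Real.exp_pos _), ← Real.exp_zero]
    apply Real.exp_le_exp.2
    have h1 : sInf (Set.range fun j => ∑ s ∈ Finset.Icc 1 t, ℓ s ω j)
        ≤ ∑ s ∈ Finset.Icc 1 t, ℓ s ω i :=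
      csInf_le (Set.finite_range _).bddBelow ⟨i, rfl⟩
    nlinarith
  have hint2 : Integrable (fun ω => Real.exp (β * ∑ s : Fin t, Hq (ℓ ((s : ℕ) + 1) ω))) μ := by
    apply Integrable.mono' (integrable_const (Real.exp (β * t)))
      (((Finset.measurable_sum _ fun s _ => hHm.comp (hmeas _)).const_mul β).exp).aestronglyMeasurable
    refine Filter.Eventually.of_forall fun ω => ?_
    show ‖Real.exp (β * ∑ s : Fin t, Hq (ℓ ((s : ℕ) + 1) ω))‖ ≤ Real.exp (β * t)
    rw [Real.norm_eq_abs, abs_of_pos (Real.exp_pos _)]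
    exact Real.exp_le_exp.2 (mul_le_mul_of_nonneg_left (hsum_le t _) hβ.le)
  calc ∫ ω, Real.exp (β * (sInf (Set.range fun j => ∑ s ∈ Finset.Icc 1 t, ℓ s ω j)
        - ∑ s ∈ Finset.Icc 1 t, ℓ s ω i)) ∂μ
      ≤ ∫ ω, Real.exp (β * ∑ s : Fin t, Hq (ℓ ((s : ℕ) + 1) ω)) ∂μ :=
        integral_mono_ae hint1 hint2 (Filter.Eventually.of_forall fun ω =>
          Real.exp_le_exp.2 (mul_le_mul_of_nonneg_left (hpt ω) hβ.le))
  _ ≤ K ^ t := ind t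
  _ = Real.exp ((t : ℝ) * (β ^ 2 / 2 - β * Δ)) := by
      rw [hK, ← Real.exp_nat_mul]
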